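/- arXiv:2411.02707 — 5 statements merged into one kernel-verified Lean document; each statement's English description precedes it below -/
import Mathlib

section
/- If Φ : M → M is a unital 2-positive linear map on a C*-algebra M and x ∈ M, then Φ(x)*Φ(x) ≤ Φ(x*x) (the Kadison–Schwarz inequality), and consequently if there is a faithful state ω with ω∘Φ = ω and Φ(x) = αx with |α| = 1, then Φ(x*x) = x*x. -/
open Matrix Complex ComplexOrder

variable {n : Type*} [Fintype n] [DecidableEq n]

/-- Apply `Φ` entrywise to the `m × m` blocks of a block matrix. -/
def blockApply (m : ℕ) (Φ : Matrix n n ℂ →ₗ[ℂ] Matrix n n ℂ)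
    (A : Matrix (Fin m × n) (Fin m × n) ℂ) : Matrix (Fin m × n) (Fin m × n) ℂ :=
  Matrix.of fun p q => Φ (Matrix.of fun a b => A (p.1, a) (q.1, b)) p.2 q.2

/-- `Φ` is 2-positive. -/
def IsTwoPositive (Φ : Matrix n n ℂ →ₗ[ℂ] Matrix n n ℂ) : Prop :=
  ∀ A : Matrix (Fin 2 × n) (Fin 2 × n) ℂ, A.PosSemidef → (blockApply 2 Φ A).PosSemidef

/-- The obvious equivalence between `n ⊕ n` and `Fin 2 × n`. -/
def sumEquivTwo (n : Type*) : n ⊕ n ≃ Fin 2 × n where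
  toFun := Sum.elim (fun a => ((0 : Fin 2), a)) (fun a => ((1 : Fin 2), a))
  invFun p := if p.1 = 0 then .inl p.2 else .inr p.2
  left_inv s := by cases s <;> simp
  right_inv p := by
    rcases p with ⟨i, a⟩
    fin_cases i <;> simp

theorem posDef_one' : (1 : Matrix n n ℂ).PosDef := by
  have := Matrix.PosDef.diagonal (d := fun _ : n => (1 : ℂ)) (fun _ => zero_lt_one)
  simpa using this

/-- Kadison–Schwarz inequality for unital 2-positive maps, and the consequence that if
`ω` is a faithful invariant state and `Φ x = α • x` with `|α| = 1`, then `Φ (x* x) = x* x`. -/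
theorem stmt0 (Φ : Matrix n n ℂ →ₗ[ℂ] Matrix n n ℂ)
    (hΦ1 : Φ 1 = 1) (h2p : IsTwoPositive Φ) (x : Matrix n n ℂ) :
    (Φ (xᴴ * x) - (Φ x)ᴴ * Φ x).PosSemidef ∧
    (∀ (ω : Matrix n n ℂ →ₗ[ℂ] ℂ) (α : ℂ),
      (∀ y, y.PosSemidef → 0 ≤ ω y) →
      (∀ y, y.PosSemidef → ω y = 0 → y = 0) →
      (∀ y, ω (Φ y) = ω y) →
      ‖α‖ = 1 → Φ x = α • x → Φ (xᴴ * x) = xᴴ * x) := by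
  set e := sumEquivTwo n
  -- the block matrix [[1, x],[xᴴ, xᴴx]] as a matrix on Fin 2 × n
  set B0 : Matrix (Fin 2 × n) (Fin 2 × n) ℂ :=
    (fromBlocks 1 x xᴴ (xᴴ * x)).submatrix e.symm e.symm with hB0
  have hB0psd : B0.PosSemidef := by
    have hfac : fromBlocks (1 : Matrix n n ℂ) x xᴴ (xᴴ * x) =
        (fromBlocks 1 x 0 0)ᴴ * fromBlocks 1 x 0 0 := by
      simp [fromBlocks_conjTranspose, fromBlocks_multiply]
    rw [hB0, hfac]
    exact (posSemidef_conjTranspose_mul_self _).submatrix _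
  have hpsd := h2p B0 hB0psd
  -- identify the image block matrix
  have hkey : (blockApply 2 Φ B0).submatrix e e =
      fromBlocks 1 (Φ x) (Φ xᴴ) (Φ (xᴴ * x)) := by
    ext i j
    have h00 : (Matrix.of fun a b => B0 ((0 : Fin 2), a) ((0 : Fin 2), b)) = 1 := by
      ext a b; simp [hB0, e, sumEquivTwo, fromBlocks]
    have h01 : (Matrix.of fun a b => B0 ((0 : Fin 2), a) ((1 : Fin 2), b)) = x := by
      ext a b; simp [hB0, e, sumEquivTwo, fromBlocks]
    have h10 : (Matrix.of fun a b => B0 ((1 : Fin 2), a) ((0 : Fin 2), b)) = xᴴ := by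
      ext a b; simp [hB0, e, sumEquivTwo, fromBlocks]
    have h11 : (Matrix.of fun a b => B0 ((1 : Fin 2), a) ((1 : Fin 2), b)) = xᴴ * x := by
      ext a b; simp [hB0, e, sumEquivTwo, fromBlocks]
    cases i <;> cases j <;>
      simp [blockApply, e, sumEquivTwo, fromBlocks, h00, h01, h10, h11, hΦ1]
  have hpsd2 : (fromBlocks 1 (Φ x) (Φ xᴴ) (Φ (xᴴ * x))).PosSemidef := by
    rw [← hkey]; exact hpsd.submatrix _
  -- Φ preserves the adjoint of x
  have hadj : Φ xᴴ = (Φ x)ᴴ := by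
    have hH := hpsd2.isHermitian
    ext a b
    have := congrFun (congrFun hH (Sum.inr a)) (Sum.inl b)
    simpa [conjTranspose_apply, fromBlocks, Matrix.IsHermitian] using this.symm
  rw [hadj] at hpsd2
  have hschur : (Φ (xᴴ * x) - (Φ x)ᴴ * Φ x).PosSemidef := by
    letI : Invertible (1 : Matrix n n ℂ) := invertibleOne
    have := (Matrix.PosDef.fromBlocks₁₁ (Φ x) (Φ (xᴴ * x))
      (posDef_one' (n := n))).mp hpsd2
    simpa using this
  refine ⟨hschur, fun ω α hpos hfaith hinv habs hfix => ?_⟩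
  have hα : star α * α = 1 := by
    have h1 : Complex.normSq α = 1 := by
      rw [Complex.normSq_eq_norm_sq, habs]; norm_num
    have : α * star α = 1 := by
      rw [show star α = (starRingEnd ℂ) α from rfl, Complex.mul_conj, h1]; norm_num
    rw [mul_comm]; exact this
  have hΦxΦx : (Φ x)ᴴ * Φ x = xᴴ * x := by
    rw [hfix, conjTranspose_smul, smul_mul_assoc, mul_smul_comm, smul_smul, hα, one_smul]
  have hω0 : ω (Φ (xᴴ * x) - (Φ x)ᴴ * Φ x) = 0 := by
    rw [map_sub, hΦxΦx, hinv, sub_self]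
  have := hfaith _ hschur hω0
  rw [hΦxΦx] at this
  rw [sub_eq_zero] at this
  exact this
end

section
/- Let Φ be a unital completely positive trace-preserving map on Matrix n n ℂ. Then the Cesàro averages (1/N)∑_{k=1}^{N} Φ^k converge (along any convergent subsequence; in finite dimensions the limit exists) to a positive linear projection E onto the fixed-point space of Φ, satisfying E∘Φ = Φ∘E = E and E∘E = E. -/
open Matrix Complex ComplexOrder Filter

variable {n : Type*} [Fintype n] [DecidableEq n]

/-- `Φ` is completely positive. -/
def IsCompletelyPositive (Φ : Matrix n n ℂ →ₗ[ℂ] Matrix n n ℂ) : Prop :=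
  ∀ (m : ℕ) (A : Matrix (Fin m × n) (Fin m × n) ℂ), A.PosSemidef → (blockApply m Φ A).PosSemidef

private lemma abs_entry_le_trace_re {A : Matrix n n ℂ} (hA : A.PosSemidef) (i j : n) :
    ‖A i j‖ ≤ A.trace.re := by
  classical
  obtain ⟨B, rfl⟩ : ∃ B : Matrix n n ℂ, A = Bᴴ * B := by
    open scoped MatrixOrder in
    exact ⟨CFC.sqrt A, by
      rw [← star_eq_conjTranspose, (CFC.sqrt_nonneg A).isSelfAdjoint.star_eq,
        CFC.sqrt_mul_sqrt_self A hA.nonneg]⟩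
  set r : n → ℝ := fun p => ∑ k, Complex.normSq (B k p) with hr
  have hrnn : ∀ p, 0 ≤ r p := fun p => Finset.sum_nonneg fun k _ => Complex.normSq_nonneg _
  have hentry : ∀ p q : n, (Bᴴ * B) p q = ∑ k, (starRingEnd ℂ) (B k p) * B k q := by
    intro p q; simp [Matrix.mul_apply, Matrix.conjTranspose_apply]
  have htrace : (Bᴴ * B).trace.re = ∑ p, r p := by
    simp only [Matrix.trace, Matrix.diag_apply, hentry, Complex.re_sum, hr]
    refine Finset.sum_congr rfl fun p _ => Finset.sum_congr rfl fun k _ => ?_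
    rw [← Complex.normSq_eq_conj_mul_self]
    simp
  have hij : ‖(Bᴴ * B) i j‖ ≤ (r i + r j) / 2 := by
    rw [hentry]
    refine (norm_sum_le _ _).trans ?_
    have h1 : ∀ k : n, ‖(starRingEnd ℂ) (B k i) * B k j‖
        ≤ (Complex.normSq (B k i) + Complex.normSq (B k j)) / 2 := by
      intro k
      rw [norm_mul, Complex.norm_conj, Complex.normSq_eq_norm_sq, Complex.normSq_eq_norm_sq]
      nlinarith [sq_nonneg (‖B k i‖ - ‖B k j‖),
        norm_nonneg (B k i), norm_nonneg (B k j)]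
    refine (Finset.sum_le_sum fun k _ => h1 k).trans (le_of_eq ?_)
    rw [← Finset.sum_div, Finset.sum_add_distrib]
  have hi : r i ≤ ∑ p, r p := Finset.single_le_sum (fun p _ => hrnn p) (Finset.mem_univ i)
  have hj : r j ≤ ∑ p, r p := Finset.single_le_sum (fun p _ => hrnn p) (Finset.mem_univ j)
  rw [htrace]
  linarith

private lemma herm_decomp {H : Matrix n n ℂ} (hH : H.IsHermitian) :
    ∃ P Q : Matrix n n ℂ, P.PosSemidef ∧ Q.PosSemidef ∧ H = P - Q := by
  classical
  set U : Matrix n n ℂ := (hH.eigenvectorUnitary : Matrix n n ℂ) with hU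
  refine ⟨U * Matrix.diagonal (fun i => ((max (hH.eigenvalues i) 0 : ℝ) : ℂ)) * Uᴴ,
    U * Matrix.diagonal (fun i => ((max (-hH.eigenvalues i) 0 : ℝ) : ℂ)) * Uᴴ, ?_, ?_, ?_⟩
  · exact (Matrix.posSemidef_diagonal_iff.mpr fun i =>
      Complex.zero_le_real.mpr (le_max_right _ _)).mul_mul_conjTranspose_same U
  · exact (Matrix.posSemidef_diagonal_iff.mpr fun i =>
      Complex.zero_le_real.mpr (le_max_right _ _)).mul_mul_conjTranspose_same U
  · rw [← Matrix.sub_mul, ← Matrix.mul_sub, Matrix.diagonal_sub]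
    have : (fun i => ((max (hH.eigenvalues i) 0 : ℝ) : ℂ) - ((max (-hH.eigenvalues i) 0 : ℝ) : ℂ))
        = fun i => ((hH.eigenvalues i : ℝ) : ℂ) := by
      funext i
      rw [← Complex.ofReal_sub, max_zero_sub_max_neg_zero_eq_self]
    rw [this]
    exact hH.spectral_theorem

private lemma sum_quadform {s : Finset ℕ} {A : ℕ → Matrix n n ℂ} {v : n → ℂ} :
    dotProduct (star v) ((∑ k ∈ s, A k) *ᵥ v)
      = ∑ k ∈ s, dotProduct (star v) (A k *ᵥ v) := by
  classical
  induction s using Finset.induction_on with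
  | empty => simp
  | insert _ _ h ih =>
    rw [Finset.sum_insert h, Finset.sum_insert h, Matrix.add_mulVec, dotProduct_add, ih]

private lemma posSemidef_of_tendsto {f : ℕ → Matrix n n ℂ} {A : Matrix n n ℂ}
    (hf : Tendsto f atTop (nhds A)) (h : ∀ N, 1 ≤ N → (f N).PosSemidef) : A.PosSemidef := by
  classical
  have hent : ∀ i j, Tendsto (fun N => f N i j) atTop (nhds (A i j)) := by
    intro i j
    exact tendsto_pi_nhds.mp (tendsto_pi_nhds.mp hf i) j
  rw [Matrix.posSemidef_iff_dotProduct_mulVec]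
  constructor
  · ext i j
    rw [Matrix.conjTranspose_apply]
    refine tendsto_nhds_unique ?_ (hent i j)
    have h1 : Tendsto (fun N => star (f N j i)) atTop (nhds (star (A j i))) :=
      (continuous_star.tendsto _).comp (hent j i)
    refine h1.congr' ?_
    filter_upwards [eventually_ge_atTop 1] with N hN
    have := (h N hN).1
    rw [← this, Matrix.conjTranspose_apply, star_star, this]
  · intro v
    have hquad : Tendsto (fun N => dotProduct (star v) (f N *ᵥ v)) atTop
        (nhds (dotProduct (star v) (A *ᵥ v))) := by
      simp only [dotProduct, Matrix.mulVec]
      exact tendsto_finset_sum _ fun i _ => tendsto_const_nhds.mul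
        (tendsto_finset_sum _ fun j _ => (hent i j).mul tendsto_const_nhds)
    have hcl : IsClosed {z : ℂ | 0 ≤ z} := by
      have : {z : ℂ | 0 ≤ z} = Complex.re ⁻¹' Set.Ici 0 ∩ Complex.im ⁻¹' {0} := by
        ext z
        simp [Complex.le_def, eq_comm]
      rw [this]
      exact (isClosed_Ici.preimage Complex.continuous_re).inter
        (isClosed_singleton.preimage Complex.continuous_im)
    refine hcl.mem_of_tendsto hquad ?_
    filter_upwards [eventually_ge_atTop 1] with N hN
    exact (h N hN).dotProduct_mulVec_nonneg v

/-- For a unital completely positive trace-preserving map `Φ`, the Cesàro averages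
`(1/N) ∑_{k=1}^N Φ^k` converge to a positive idempotent `E` projecting onto the
fixed-point space of `Φ`, with `E∘Φ = Φ∘E = E`. -/
theorem stmt8 (Φ : Module.End ℂ (Matrix n n ℂ))
    (hΦ1 : Φ 1 = 1) (hcp : IsCompletelyPositive Φ)
    (htr : ∀ x, (Φ x).trace = x.trace) :
    ∃ E : Module.End ℂ (Matrix n n ℂ),
      (∀ x, Tendsto (fun N : ℕ => (N : ℂ)⁻¹ • ∑ k ∈ Finset.Icc 1 N, (Φ ^ k) x)
        atTop (nhds (E x))) ∧
      E ∘ₗ Φ = E ∧ Φ ∘ₗ E = E ∧ E ∘ₗ E = E ∧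
      (∀ x, x.PosSemidef → (E x).PosSemidef) ∧
      Set.range E = {x | Φ x = x} := by
  classical
  -- Φ preserves positivity
  have hpos : ∀ x : Matrix n n ℂ, x.PosSemidef → (Φ x).PosSemidef := by
    intro x hx
    let e : Fin 1 × n ≃ n :=
      ⟨Prod.snd, fun a => (0, a), fun p => by
        cases p with
        | mk u a => simp [Subsingleton.elim (0 : Fin 1) u], fun a => rfl⟩
    have hA : (x.submatrix e e).PosSemidef := hx.submatrix e
    have hB := hcp 1 (x.submatrix e e) hA
    have hEq : blockApply 1 Φ (x.submatrix e e) = (Φ x).submatrix e e := rfl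
    rw [hEq] at hB
    exact (Matrix.posSemidef_submatrix_equiv e).mp hB
  have hposk : ∀ (k : ℕ) (x : Matrix n n ℂ), x.PosSemidef → ((Φ ^ k) x).PosSemidef := by
    intro k
    induction k with
    | zero => intro x hx; simpa using hx
    | succ k ih =>
      intro x hx
      rw [pow_succ, Module.End.mul_apply]
      exact ih _ (hpos x hx)
  have htrk : ∀ (k : ℕ) (x : Matrix n n ℂ), ((Φ ^ k) x).trace = x.trace := by
    intro k
    induction k with
    | zero => intro x; simp
    | succ k ih =>
      intro x
      rw [pow_succ, Module.End.mul_apply, ih, htr]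
  -- uniform boundedness of entries of Φ^k x
  have hbd : ∀ x : Matrix n n ℂ, ∃ C : ℝ, ∀ (k : ℕ) (i j : n),
      ‖((Φ ^ k) x) i j‖ ≤ C := by
    intro x
    have hHerm : ((1/2 : ℂ) • (x + xᴴ)).IsHermitian := by
      show _ᴴ = _
      ext i j
      simp only [Matrix.conjTranspose_apply, Matrix.smul_apply, Matrix.add_apply, smul_eq_mul,
        star_mul', star_add, star_star]
      simp [Complex.star_def]
      ring
    have hKerm : (((-Complex.I)/2 : ℂ) • (x - xᴴ)).IsHermitian := by
      show _ᴴ = _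
      ext i j
      simp only [Matrix.conjTranspose_apply, Matrix.smul_apply, Matrix.sub_apply, smul_eq_mul,
        star_mul', star_sub, star_star]
      simp [Complex.star_def, Complex.conj_I]
      ring
    obtain ⟨P₁, P₂, hP₁, hP₂, hPQ⟩ := herm_decomp hHerm
    obtain ⟨P₃, P₄, hP₃, hP₄, hRS⟩ := herm_decomp hKerm
    have hxdec : x = (P₁ - P₂) + Complex.I • (P₃ - P₄) := by
      rw [← hPQ, ← hRS, smul_smul]
      rw [show Complex.I * ((-Complex.I)/2) = 1/2 by
        rw [mul_div_assoc', mul_neg, Complex.I_mul_I, neg_neg]]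
      rw [← smul_add, show (x + xᴴ) + (x - xᴴ) = (2 : ℂ) • x by rw [two_smul]; abel,
        smul_smul]
      norm_num
    refine ⟨P₁.trace.re + P₂.trace.re + P₃.trace.re + P₄.trace.re, ?_⟩
    intro k i j
    have hk : (Φ ^ k) x = ((Φ ^ k) P₁ - (Φ ^ k) P₂) + Complex.I • ((Φ ^ k) P₃ - (Φ ^ k) P₄) := by
      conv_lhs => rw [hxdec]
      simp only [LinearMap.map_add, LinearMap.map_sub, LinearMap.map_smul]
    rw [hk]
    simp only [Matrix.add_apply, Matrix.sub_apply, Matrix.smul_apply, smul_eq_mul]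
    have b₁ := abs_entry_le_trace_re (hposk k _ hP₁) i j
    have b₂ := abs_entry_le_trace_re (hposk k _ hP₂) i j
    have b₃ := abs_entry_le_trace_re (hposk k _ hP₃) i j
    have b₄ := abs_entry_le_trace_re (hposk k _ hP₄) i j
    rw [htrk] at b₁ b₂ b₃ b₄
    have t₁ : ‖(Φ ^ k) P₁ i j - (Φ ^ k) P₂ i j‖
        ≤ ‖(Φ ^ k) P₁ i j‖ + ‖(Φ ^ k) P₂ i j‖ := by
      simpa [sub_eq_add_neg] using norm_add_le ((Φ ^ k) P₁ i j) (-(Φ ^ k) P₂ i j)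
    have t₂ : ‖(Φ ^ k) P₃ i j - (Φ ^ k) P₄ i j‖
        ≤ ‖(Φ ^ k) P₃ i j‖ + ‖(Φ ^ k) P₄ i j‖ := by
      simpa [sub_eq_add_neg] using norm_add_le ((Φ ^ k) P₃ i j) (-(Φ ^ k) P₄ i j)
    have tI : ‖Complex.I * ((Φ ^ k) P₃ i j - (Φ ^ k) P₄ i j)‖
        = ‖(Φ ^ k) P₃ i j - (Φ ^ k) P₄ i j‖ := by
      rw [norm_mul, Complex.norm_I, one_mul]
    calc ‖((Φ ^ k) P₁ i j - (Φ ^ k) P₂ i j)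
          + Complex.I * ((Φ ^ k) P₃ i j - (Φ ^ k) P₄ i j)‖
        ≤ ‖(Φ ^ k) P₁ i j - (Φ ^ k) P₂ i j‖
          + ‖Complex.I * ((Φ ^ k) P₃ i j - (Φ ^ k) P₄ i j)‖ :=
          norm_add_le _ _
      _ ≤ _ := by rw [tI]; linarith
  -- Cesàro averages of elements of range (1 - Φ) tend to 0
  have key0 : ∀ z : Matrix n n ℂ,
      Tendsto (fun N : ℕ => (N : ℂ)⁻¹ • ∑ k ∈ Finset.Icc 1 N, (Φ ^ k) (z - Φ z))
        atTop (nhds 0) := by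
    intro z
    obtain ⟨C, hC⟩ := hbd z
    set C' : ℝ := max C 0 with hC'def
    have hC' : ∀ (k : ℕ) (i j : n), ‖((Φ ^ k) z) i j‖ ≤ C' :=
      fun k i j => (hC k i j).trans (le_max_left _ _)
    have hC'nn : 0 ≤ C' := le_max_right _ _
    have htel : ∀ N : ℕ, ∑ k ∈ Finset.Icc 1 N, (Φ ^ k) (z - Φ z)
        = Φ z - (Φ ^ (N + 1)) z := by
      intro N
      have hterm : ∀ k : ℕ, (Φ ^ k) (z - Φ z) = (Φ ^ (k)) z - (Φ ^ (k + 1)) z := by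
        intro k
        rw [map_sub, pow_succ, Module.End.mul_apply]
      simp only [hterm]
      rw [← Finset.Ico_add_one_right_eq_Icc, Finset.sum_Ico_eq_sum_range]
      simp only [Nat.add_sub_cancel]
      have hts := Finset.sum_range_sub' (f := fun i : ℕ => (Φ ^ (i + 1)) z) N
      have : ∀ i : ℕ, (Φ ^ (1 + i)) z - (Φ ^ (1 + i + 1)) z
          = (Φ ^ (i + 1)) z - (Φ ^ (i + 1 + 1)) z := by
        intro i; rw [add_comm 1 i]
      rw [Finset.sum_congr rfl fun i _ => this i, hts]
      simp [pow_one]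
    apply tendsto_pi_nhds.mpr
    intro i
    apply tendsto_pi_nhds.mpr
    intro j
    have heq : ∀ N : ℕ, ((N : ℂ)⁻¹ • ∑ k ∈ Finset.Icc 1 N, (Φ ^ k) (z - Φ z)) i j
        = (N : ℂ)⁻¹ * ((Φ z) i j - ((Φ ^ (N + 1)) z) i j) := by
      intro N
      rw [htel N]
      simp [Matrix.smul_apply, Matrix.sub_apply]
    refine squeeze_zero_norm (f := fun N : ℕ =>
        ((N : ℂ)⁻¹ • ∑ k ∈ Finset.Icc 1 N, (Φ ^ k) (z - Φ z)) i j)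
      (a := fun N : ℕ => (N : ℝ)⁻¹ * (2 * C')) ?_ ?_
    · intro N
      simp only [heq N, norm_mul]
      have h1 : ‖((N : ℂ))⁻¹‖ = (N : ℝ)⁻¹ := by
        rw [norm_inv]
        simp
      rw [h1]
      refine mul_le_mul_of_nonneg_left ?_ (by positivity)
      have h2 : ‖(Φ z) i j - ((Φ ^ (N + 1)) z) i j‖
          ≤ ‖(Φ z) i j‖ + ‖((Φ ^ (N + 1)) z) i j‖ := by
        simpa [sub_eq_add_neg] using
          norm_add_le ((Φ z) i j) (-((Φ ^ (N + 1)) z) i j)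
      have h3 : ‖(Φ z) i j‖ ≤ C' := by
        have := hC' 1 i j
        simpa [pow_one] using this
      have h4 := hC' (N + 1) i j
      linarith
    · have := (tendsto_inv_atTop_nhds_zero_nat (𝕜 := ℝ)).mul_const (2 * C')
      simpa using this
  -- the fixed space and the range of (1 - Φ)
  set Kfix : Submodule ℂ (Matrix n n ℂ) := LinearMap.ker (1 - Φ) with hKfixdef
  set Rng : Submodule ℂ (Matrix n n ℂ) := LinearMap.range (1 - Φ) with hRngdef
  have hmemK : ∀ y : Matrix n n ℂ, y ∈ Kfix ↔ Φ y = y := by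
    intro y
    rw [hKfixdef, LinearMap.mem_ker, LinearMap.sub_apply, Module.End.one_apply, sub_eq_zero]
    exact eq_comm
  have hfixk : ∀ (y : Matrix n n ℂ), Φ y = y → ∀ k : ℕ, (Φ ^ k) y = y := by
    intro y hy k
    induction k with
    | zero => simp
    | succ k ih => rw [pow_succ, Module.End.mul_apply, hy, ih]
  -- Cesàro averages of fixed points converge to themselves
  have hfixconv : ∀ y : Matrix n n ℂ, Φ y = y →
      Tendsto (fun N : ℕ => (N : ℂ)⁻¹ • ∑ k ∈ Finset.Icc 1 N, (Φ ^ k) y) atTop (nhds y) := by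
    intro y hy
    refine (tendsto_const_nhds (x := y)).congr' ?_
    filter_upwards [eventually_ge_atTop 1] with N hN
    rw [Finset.sum_congr rfl fun k _ => hfixk y hy k, Finset.sum_const, Nat.card_Icc]
    simp only [Nat.add_sub_cancel]
    rw [← Nat.cast_smul_eq_nsmul ℂ, smul_smul, inv_mul_cancel₀, one_smul]
    exact Nat.cast_ne_zero.mpr (by omega)
  have hdisj : Disjoint Kfix Rng := by
    rw [Submodule.disjoint_def]
    intro y hyK hyR
    obtain ⟨z, hz⟩ := hyR
    have hyz : y = z - Φ z := by
      rw [← hz]; simp [LinearMap.sub_apply]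
    have h1 := hfixconv y ((hmemK y).mp hyK)
    have h2 : Tendsto (fun N : ℕ => (N : ℂ)⁻¹ • ∑ k ∈ Finset.Icc 1 N, (Φ ^ k) y)
        atTop (nhds 0) := by
      rw [hyz]; exact key0 z
    exact tendsto_nhds_unique h1 h2
  have hdim : Module.finrank ℂ Kfix + Module.finrank ℂ Rng
      = Module.finrank ℂ (Matrix n n ℂ) := by
    rw [add_comm, hKfixdef, hRngdef]
    exact LinearMap.finrank_range_add_finrank_ker (1 - Φ)
  have hcompl : IsCompl Kfix Rng :=
    ⟨hdisj, codisjoint_iff.mpr (Submodule.eq_top_of_disjoint _ _ hdim.ge hdisj)⟩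
  set E : Module.End ℂ (Matrix n n ℂ) :=
    Kfix.subtype ∘ₗ (Kfix.projectionOnto Rng hcompl) with hEdef
  have hEmem : ∀ x, E x ∈ Kfix := fun x => (Kfix.projectionOnto Rng hcompl x).2
  have hEfixpt : ∀ x, Φ (E x) = E x := fun x => (hmemK _).mp (hEmem x)
  have hEfix : ∀ x ∈ Kfix, E x = x := by
    intro x hx
    have := Submodule.projectionOnto_apply_left hcompl (⟨x, hx⟩ : Kfix)
    simp [hEdef, Submodule.projectionOnto_apply_of_mem_left hcompl hx]
  have hE0 : ∀ y ∈ Rng, E y = 0 := by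
    intro y hy
    simp [hEdef, Submodule.projectionOnto_apply_of_mem_right hcompl hy]
  have hsub : ∀ x : Matrix n n ℂ, x - E x ∈ Rng := by
    intro x
    have h := Submodule.projection_add_projection_eq_self hcompl x
    have : x - E x = ((Rng.projectionOnto Kfix hcompl.symm x : Matrix n n ℂ)) :=
      (eq_sub_of_add_eq' h).symm
    rw [this]
    exact Submodule.coe_mem _
  have hconv : ∀ x, Tendsto (fun N : ℕ => (N : ℂ)⁻¹ • ∑ k ∈ Finset.Icc 1 N, (Φ ^ k) x)
      atTop (nhds (E x)) := by
    intro x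
    obtain ⟨z, hz⟩ := hsub x
    have hzx : z - Φ z = x - E x := by
      rw [← hz]; simp [LinearMap.sub_apply]
    have hxz : x = E x + (z - Φ z) := by rw [hzx]; abel
    have hterm : ∀ k : ℕ, (Φ ^ k) x = (Φ ^ k) (E x) + (Φ ^ k) (z - Φ z) := by
      intro k
      conv_lhs => rw [hxz]
      rw [map_add]
    have hsplit : ∀ N : ℕ, (N : ℂ)⁻¹ • ∑ k ∈ Finset.Icc 1 N, (Φ ^ k) x
        = ((N : ℂ)⁻¹ • ∑ k ∈ Finset.Icc 1 N, (Φ ^ k) (E x))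
          + ((N : ℂ)⁻¹ • ∑ k ∈ Finset.Icc 1 N, (Φ ^ k) (z - Φ z)) := by
      intro N
      rw [← smul_add, ← Finset.sum_add_distrib]
      congr 1
      exact Finset.sum_congr rfl fun k _ => hterm k
    have t1 := hfixconv (E x) (hEfixpt x)
    have t2 := key0 z
    have := t1.add t2
    rw [add_zero] at this
    exact this.congr fun N => (hsplit N).symm
  have hEΦ : E ∘ₗ Φ = E := by
    apply LinearMap.ext
    intro x
    have hmem : Φ x - x ∈ Rng := by
      refine ⟨-x, ?_⟩
      simp [LinearMap.sub_apply]
      abel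
    have h0 := hE0 _ hmem
    rw [map_sub] at h0
    have := sub_eq_zero.mp h0
    simpa using this
  have hΦE : Φ ∘ₗ E = E := LinearMap.ext fun x => hEfixpt x
  have hEE : E ∘ₗ E = E := LinearMap.ext fun x => hEfix _ (hEmem x)
  have hEpos : ∀ x : Matrix n n ℂ, x.PosSemidef → (E x).PosSemidef := by
    intro x hx
    apply posSemidef_of_tendsto (hconv x)
    intro N hN
    rw [Matrix.posSemidef_iff_dotProduct_mulVec]
    constructor
    · have hS : (∑ k ∈ Finset.Icc 1 N, (Φ ^ k) x).IsHermitian := by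
        show _ᴴ = _
        rw [Matrix.conjTranspose_sum]
        exact Finset.sum_congr rfl fun k _ => (hposk k x hx).1
      show _ᴴ = _
      rw [Matrix.conjTranspose_smul, hS]
      congr 1
      simp
    · intro v
      rw [Matrix.smul_mulVec, dotProduct_smul, smul_eq_mul]
      apply mul_nonneg
      · have : ((N : ℂ))⁻¹ = (((N : ℝ)⁻¹ : ℝ) : ℂ) := by push_cast; ring
        rw [this]
        exact Complex.zero_le_real.mpr (by positivity)
      · rw [sum_quadform]
        exact Finset.sum_nonneg fun k _ => (hposk k x hx).dotProduct_mulVec_nonneg v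
  have hrange : Set.range E = {x : Matrix n n ℂ | Φ x = x} := by
    ext x
    constructor
    · rintro ⟨y, rfl⟩
      exact hEfixpt y
    · intro hxfix
      exact ⟨x, hEfix x ((hmemK x).mpr hxfix)⟩
  exact ⟨E, hconv, hEΦ, hΦE, hEE, hEpos, hrange⟩
end

section
/- Let Φ be a unital positive map on Matrix n n ℂ with a faithful invariant state, and suppose the fixed-point space M(Φ,1) is a *-subalgebra which is a factor (trivial center). If u ∈ M(Φ,α) is a nonzero element with polar decomposition u = v|u| and |u| ∈ M(Φ,1), then the partial isometry v also lies in M(Φ,α). -/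
open Matrix Complex ComplexOrder

variable {n : Type*} [Fintype n] [DecidableEq n]

/-- the block-Gram matrix of the pair of blocks is PSD after applying Φ. -/
lemma gram_psd (Φ : Matrix n n ℂ →ₗ[ℂ] Matrix n n ℂ)
    (hcp : IsCompletelyPositive Φ) (M : Fin 2 → Matrix n n ℂ) :
    (Matrix.of fun p q : Fin 2 × n => Φ ((M p.1)ᴴ * M q.1) p.2 q.2).PosSemidef := by
  set B : Matrix (Fin 2 × n) (Fin 2 × n) ℂ :=
    Matrix.of (fun p q => if p.1 = 0 then M q.1 p.2 q.2 else 0) with hB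
  have hA : (Bᴴ * B).PosSemidef := Matrix.posSemidef_conjTranspose_mul_self B
  have hpsd := hcp 2 (Bᴴ * B) hA
  have he : blockApply 2 Φ (Bᴴ * B) =
      Matrix.of fun p q : Fin 2 × n => Φ ((M p.1)ᴴ * M q.1) p.2 q.2 := by
    unfold blockApply
    ext p q
    show Φ (Matrix.of fun a b => (Bᴴ * B) (p.1, a) (q.1, b)) p.2 q.2 = _
    have harg : (Matrix.of fun a b => (Bᴴ * B) (p.1, a) (q.1, b)) = (M p.1)ᴴ * M q.1 := by
      ext a b
      simp only [Matrix.of_apply, Matrix.mul_apply, Matrix.conjTranspose_apply, hB]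
      rw [Fintype.sum_prod_type, Fin.sum_univ_two]
      simp
    rw [harg]
    rfl
  rwa [he] at hpsd

lemma star_pres (Φ : Matrix n n ℂ →ₗ[ℂ] Matrix n n ℂ)
    (hcp : IsCompletelyPositive Φ) (z : Matrix n n ℂ) : Φ zᴴ = (Φ z)ᴴ := by
  have h := (gram_psd Φ hcp ![1, z]).1
  ext i j
  have h2 := congr_fun (congr_fun h ((1 : Fin 2), i)) ((0 : Fin 2), j)
  simp only [Matrix.conjTranspose_apply, Matrix.of_apply, Matrix.cons_val_one, Matrix.cons_val_zero,
    Matrix.head_cons, Matrix.conjTranspose_one, Matrix.one_mul, Matrix.mul_one] at h2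
  rw [Matrix.conjTranspose_apply]
  exact h2.symm

def sumEquiv : (n ⊕ n) ≃ (Fin 2 × n) where
  toFun := Sum.elim (fun i => (0, i)) (fun i => (1, i))
  invFun := fun p => if p.1 = 0 then Sum.inl p.2 else Sum.inr p.2
  left_inv := by rintro (i | i) <;> simp
  right_inv := by
    rintro ⟨s, i⟩
    fin_cases s <;> simp

lemma schwarz (Φ : Matrix n n ℂ →ₗ[ℂ] Matrix n n ℂ) (hΦ1 : Φ 1 = 1)
    (hcp : IsCompletelyPositive Φ) (z : Matrix n n ℂ) :
    (Φ (zᴴ * z) - (Φ z)ᴴ * Φ z).PosSemidef := by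
  have hg := gram_psd Φ hcp ![1, z]
  have h2 := (Matrix.posSemidef_submatrix_equiv (sumEquiv (n := n))).2 hg
  have heq : (Matrix.of fun p q : Fin 2 × n => Φ ((![1, z] p.1)ᴴ * ![1, z] q.1) p.2 q.2).submatrix
      (sumEquiv (n := n)) (sumEquiv (n := n))
      = Matrix.fromBlocks 1 (Φ z) (Φ z)ᴴ (Φ (zᴴ * z)) := by
    ext (i | i) (j | j) <;>
      simp [sumEquiv, Matrix.fromBlocks, Matrix.submatrix_apply, hΦ1, ← star_pres Φ hcp z]
  rw [heq] at h2
  have hinv : Invertible (1 : Matrix n n ℂ) := invertibleOne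
  have h3 := (Matrix.PosDef.fromBlocks₁₁ (Φ z) (Φ (zᴴ * z)) Matrix.PosDef.one).1 h2
  simpa [inv_one] using h3

lemma quad_zero (M : Matrix n n ℂ)
    (h : ∀ ξ : n → ℂ, dotProduct (star ξ) (M *ᵥ ξ) = 0) : M = 0 := by
  have key : ∀ x : EuclideanSpace ℂ n, (inner ℂ ((Matrix.toEuclideanLin M) x) x : ℂ) = 0 := by
    intro x
    rw [← inner_conj_symm, EuclideanSpace.inner_eq_star_dotProduct,
      Matrix.ofLp_toEuclideanLin_apply, dotProduct_comm, h]
    exact map_zero _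
  exact Matrix.toEuclideanLin.map_eq_zero_iff.mp ((inner_map_self_eq_zero _).1 key)

lemma quad_conj (M : Matrix n n ℂ) (ξ : n → ℂ) :
    dotProduct (star ξ) (Mᴴ *ᵥ ξ) = starRingEnd ℂ (dotProduct (star ξ) (M *ᵥ ξ)) := by
  simp only [dotProduct, Matrix.mulVec, Matrix.conjTranspose_apply, Pi.star_apply,
    map_sum, Finset.mul_sum, RCLike.star_def, starRingEnd_self_apply]
  rw [Finset.sum_comm]
  refine Finset.sum_congr rfl fun i _ => Finset.sum_congr rfl fun j _ => ?_
  simp only [_root_.map_mul, Complex.conj_conj]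
  ring

lemma mult_domain (Φ : Matrix n n ℂ →ₗ[ℂ] Matrix n n ℂ) (hΦ1 : Φ 1 = 1)
    (hcp : IsCompletelyPositive Φ) (y : Matrix n n ℂ)
    (hy : Φ (yᴴ * y) = (Φ y)ᴴ * Φ y) (x : Matrix n n ℂ) :
    Φ (yᴴ * x) = (Φ y)ᴴ * Φ x := by
  rw [← sub_eq_zero]
  apply quad_zero
  intro ξ
  set Byx := Φ (yᴴ * x) - (Φ y)ᴴ * Φ x with hByx
  set Bxy := Φ (xᴴ * y) - (Φ x)ᴴ * Φ y with hBxy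
  set Bxx := Φ (xᴴ * x) - (Φ x)ᴴ * Φ x with hBxx
  have hconj : Bxy = Byxᴴ := by
    rw [hByx, hBxy, Matrix.conjTranspose_sub, ← star_pres Φ hcp (yᴴ * x),
      Matrix.conjTranspose_mul, Matrix.conjTranspose_mul, Matrix.conjTranspose_conjTranspose,
      Matrix.conjTranspose_conjTranspose]
  set c := dotProduct (star ξ) (Byx *ᵥ ξ) with hc
  set K := dotProduct (star ξ) (Bxx *ᵥ ξ) with hK
  have hK0 : (0 : ℂ) ≤ K := (schwarz Φ hΦ1 hcp x).dotProduct_mulVec_nonneg ξ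
  have hexp : ∀ t : ℂ, 0 ≤ (starRingEnd ℂ t) * (starRingEnd ℂ c) + t * c
      + ((starRingEnd ℂ t) * t) * K := by
    intro t
    have hps := (schwarz Φ hΦ1 hcp (y + t • x)).dotProduct_mulVec_nonneg ξ
    have hmat : Φ ((y + t • x)ᴴ * (y + t • x)) - (Φ (y + t • x))ᴴ * Φ (y + t • x)
        = (starRingEnd ℂ t) • Bxy + t • Byx + ((starRingEnd ℂ t) * t) • Bxx := by
      simp only [Matrix.conjTranspose_add, Matrix.conjTranspose_smul, Matrix.add_mul,
        Matrix.mul_add, map_add, LinearMap.map_smul, Matrix.smul_mul, Matrix.mul_smul,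
        hBxy, hByx, hBxx, RCLike.star_def, smul_smul]
      rw [hy]
      module
    rw [hmat] at hps
    have hdot : dotProduct (star ξ)
        (((starRingEnd ℂ t) • Bxy + t • Byx + ((starRingEnd ℂ t) * t) • Bxx) *ᵥ ξ)
        = (starRingEnd ℂ t) * (starRingEnd ℂ c) + t * c + ((starRingEnd ℂ t) * t) * K := by
      rw [hconj]
      simp only [Matrix.add_mulVec, Matrix.smul_mulVec, dotProduct_add,
        dotProduct_smul, smul_eq_mul]
      rw [quad_conj, ← hc, ← hK]
    rwa [hdot] at hps
  -- now the scalar Cauchy-Schwarz argument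
  obtain ⟨hk0, hKim⟩ := Complex.le_def.1 hK0
  simp only [Complex.zero_re, Complex.zero_im] at hk0 hKim
  set k := K.re with hkdef
  have him : K = ((k : ℝ) : ℂ) := by
    apply Complex.ext
    · simp [hkdef]
    · simp [← hKim]
  set s : ℝ := 1 / (k + 1) with hsdef
  set m : ℝ := Complex.normSq c with hmdef
  have hm0 : 0 ≤ m := Complex.normSq_nonneg c
  have hk1 : (0:ℝ) < k + 1 := by linarith
  have hspos : 0 < s := by positivity
  have hsk : s * (k + 1) = 1 := by
    rw [hsdef]
    field_simp
  have hval : (starRingEnd ℂ) (-(s : ℂ) * (starRingEnd ℂ) c) * (starRingEnd ℂ) c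
      + (-(s : ℂ) * (starRingEnd ℂ) c) * c
      + ((starRingEnd ℂ) (-(s : ℂ) * (starRingEnd ℂ) c) * (-(s : ℂ) * (starRingEnd ℂ) c)) * K
      = ((-2 * s * m + s ^ 2 * m * k : ℝ) : ℂ) := by
    rw [him]
    simp only [_root_.map_mul, map_neg, Complex.conj_conj, Complex.conj_ofReal]
    push_cast
    linear_combination (-2 * (s:ℂ) + (s:ℂ)^2 * (k:ℂ)) * Complex.mul_conj c
  have hineq := hexp (-(s : ℂ) * (starRingEnd ℂ) c)
  rw [hval] at hineq
  have hr : (0:ℝ) ≤ -2 * s * m + s ^ 2 * m * k := by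
    exact_mod_cast hineq
  have h6 : s * m * (s * (k + 1)) = s * m := by rw [hsk]; ring
  have hm0' : m ≤ 0 := by
    nlinarith [hr, h6, hspos, hm0, mul_nonneg hspos.le hm0,
      mul_nonneg (mul_nonneg hspos.le hspos.le) hm0]
  have hmeq : m = 0 := le_antisymm hm0' hm0
  exact Complex.normSq_eq_zero.1 hmeq

lemma myConjPow (U D : Matrix n n ℂ) (hU : U * Uᴴ = 1) (hU' : Uᴴ * U = 1) (k : ℕ) :
    (U * D * Uᴴ) ^ k = U * D ^ k * Uᴴ := by
  induction k with
  | zero => simp [hU]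
  | succ k ih =>
      calc (U * D * Uᴴ) ^ (k + 1) = U * D ^ k * Uᴴ * (U * D * Uᴴ) := by rw [pow_succ, ih]
      _ = U * D ^ k * (Uᴴ * U) * D * Uᴴ := by simp only [Matrix.mul_assoc]
      _ = U * D ^ k * D * Uᴴ := by rw [hU', Matrix.mul_one]
      _ = U * D ^ (k + 1) * Uᴴ := by rw [pow_succ, ← Matrix.mul_assoc]

lemma aeval_conj (U D : Matrix n n ℂ) (hU : U * Uᴴ = 1) (hU' : Uᴴ * U = 1) (r : Polynomial ℂ) :
    Polynomial.aeval (U * D * Uᴴ) r = U * (Polynomial.aeval D r) * Uᴴ := by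
  rw [Polynomial.aeval_eq_sum_range, Polynomial.aeval_eq_sum_range]
  rw [Finset.mul_sum, Finset.sum_mul]
  refine Finset.sum_congr rfl fun i _ => ?_
  rw [myConjPow U D hU hU' i, Matrix.mul_smul, Matrix.smul_mul]

lemma aeval_diagonal (c : n → ℂ) (r : Polynomial ℂ) :
    Polynomial.aeval (Matrix.diagonal c) r
      = Matrix.diagonal (fun i => Polynomial.eval (c i) r) := by
  have h := Polynomial.aeval_algHom_apply ((Matrix.diagonalAlgHom ℂ : (n → ℂ) →ₐ[ℂ] Matrix n n ℂ)) c r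
  simp only [Matrix.diagonalAlgHom_apply] at h
  rw [h]
  have h2 : (Polynomial.aeval c) r = fun i => Polynomial.eval (c i) r := by
    funext i
    rw [Polynomial.aeval_fn_apply, Polynomial.coe_aeval_eq_eval]
  rw [h2]

lemma support_exists (a : Matrix n n ℂ) (ha : a.IsHermitian) :
    ∃ r : Polynomial ℂ, a * a * Polynomial.aeval a r = a := by
  classical
  set c : n → ℂ := RCLike.ofReal ∘ ha.eigenvalues with hc
  set f : ℂ → ℂ := fun t => if t = 0 then 0 else t⁻¹ with hf
  set sf : Finset ℂ := Finset.image c Finset.univ with hsf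
  have hinj : Set.InjOn id (sf : Set ℂ) := Set.injOn_id _
  set r := Lagrange.interpolate sf id f with hr
  refine ⟨r, ?_⟩
  have heval : ∀ i, Polynomial.eval (c i) r = f (c i) := by
    intro i
    have hi : c i ∈ sf := Finset.mem_image_of_mem c (Finset.mem_univ i)
    rw [hr]
    exact Lagrange.eval_interpolate_at_node f hinj hi
  set U : Matrix n n ℂ := (Matrix.IsHermitian.eigenvectorUnitary ha : Matrix n n ℂ) with hUdef
  have hU : U * Uᴴ = 1 := by
    rw [← Matrix.star_eq_conjTranspose]
    exact (Matrix.mem_unitaryGroup_iff).mp (Matrix.IsHermitian.eigenvectorUnitary ha).2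
  have hU' : Uᴴ * U = 1 := by
    rw [← Matrix.star_eq_conjTranspose]
    exact (Matrix.mem_unitaryGroup_iff').mp (Matrix.IsHermitian.eigenvectorUnitary ha).2
  have hspec : a = U * Matrix.diagonal c * Uᴴ := by
    rw [← Matrix.star_eq_conjTranspose]
    exact Matrix.IsHermitian.spectral_theorem ha
  set D : Matrix n n ℂ := Matrix.diagonal c with hD
  have hDD : D * D * Polynomial.aeval D r = D := by
    rw [hD, aeval_diagonal, Matrix.diagonal_mul_diagonal, Matrix.diagonal_mul_diagonal]
    have hdiag : (fun i => c i * c i * Polynomial.eval (c i) r) = c := by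
      funext i
      rw [heval i]
      by_cases h0 : c i = 0
      · simp [h0, hf]
      · simp only [hf, if_neg h0]
        field_simp
    rw [hdiag]
  calc a * a * Polynomial.aeval a r
      = (U * D * Uᴴ) * (U * D * Uᴴ) * (U * Polynomial.aeval D r * Uᴴ) := by
        rw [← hspec, ← aeval_conj U D hU hU', ← hspec]
    _ = U * (D * (Uᴴ * U) * (D * (Uᴴ * U) * Polynomial.aeval D r)) * Uᴴ := by
        simp only [Matrix.mul_assoc]
    _ = U * (D * D * Polynomial.aeval D r) * Uᴴ := by
        rw [hU']
        simp only [Matrix.mul_one, Matrix.mul_assoc]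
    _ = a := by rw [hDD, ← hspec]

/-- If `u ∈ M(Φ,α)` has polar decomposition `u = v·|u|` with `|u| ∈ M(Φ,1)`
(and `v` the canonical partial isometry vanishing on the kernel of `|u|`),
then `v ∈ M(Φ,α)`. -/
theorem stmt9 (Φ : Matrix n n ℂ →ₗ[ℂ] Matrix n n ℂ)
    (hΦ1 : Φ 1 = 1) (hcp : IsCompletelyPositive Φ)
    (ω : Matrix n n ℂ →ₗ[ℂ] ℂ)
    (hωpos : ∀ y, y.PosSemidef → 0 ≤ ω y)
    (hωfaith : ∀ y, y.PosSemidef → ω y = 0 → y = 0)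
    (hωinv : ∀ y, ω (Φ y) = ω y)
    -- M(Φ,ᾱ)·M(Φ,α) ⊆ M(Φ,1) :
    (hmulsub : ∀ (β : ℂ), ‖β‖ = 1 → ∀ a b : Matrix n n ℂ,
      Φ a = (starRingEnd ℂ β) • a → Φ b = β • b → Φ (a * b) = a * b)
    -- M(Φ,1) is a factor (trivial center):
    (hfactor : ∀ z : Matrix n n ℂ, Φ z = z → (∀ w, Φ w = w → z * w = w * z) →
      ∃ c : ℂ, z = c • 1)
    (α : ℂ) (hα : ‖α‖ = 1)
    (u : Matrix n n ℂ) (hu0 : u ≠ 0) (hu : Φ u = α • u)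
    (a : Matrix n n ℂ) (ha : a.PosSemidef) (ha2 : a * a = uᴴ * u) (hafix : Φ a = a)
    (v : Matrix n n ℂ) (hva : v * a = u) (hvker : ∀ b : Matrix n n ℂ, a * b = 0 → v * b = 0) :
    Φ v = α • v := by
  have hstar : ∀ z : Matrix n n ℂ, Φ zᴴ = (Φ z)ᴴ := star_pres Φ hcp
  have hfixmul : ∀ x y : Matrix n n ℂ, Φ x = x → Φ y = y → Φ (x * y) = x * y := by
    intro x y hx hy
    exact hmulsub 1 (by simp) x y (by simpa using hx) (by simpa using hy)
  have hpow : ∀ k : ℕ, Φ (a ^ k) = a ^ k := by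
    intro k
    induction k with
    | zero => simpa using hΦ1
    | succ k ih => rw [pow_succ]; exact hfixmul _ _ ih hafix
  obtain ⟨r, hr⟩ := support_exists a ha.1
  set w : Matrix n n ℂ := Polynomial.aeval a r with hw
  have hwfix : Φ w = w := by
    rw [hw, Polynomial.aeval_eq_sum_range, map_sum]
    refine Finset.sum_congr rfl fun i _ => ?_
    rw [LinearMap.map_smul, hpow]
  set p : Matrix n n ℂ := a * w with hp
  have hap : a * p = a := by rw [hp, ← Matrix.mul_assoc, hr]
  have hpfix : Φ p = p := hfixmul a w hafix hwfix
  have hpHfix : Φ pᴴ = pᴴ := by rw [hstar, hpfix]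
  have haHfix : Φ aᴴ = aᴴ := by rw [hstar, hafix]
  -- the multiplicative-domain hypotheses for `a` and `p`
  have hyp : Φ (pᴴ * p) = (Φ p)ᴴ * Φ p := by
    rw [hfixmul pᴴ p hpHfix hpfix, hpfix, ← hpfix, ← hstar, hpHfix]
  have hya : Φ (aᴴ * a) = (Φ a)ᴴ * Φ a := by
    rw [hfixmul aᴴ a haHfix hafix, hafix, ← hafix, ← hstar, haHfix]
  -- right multiplicativity
  have hright : ∀ (y : Matrix n n ℂ), Φ (yᴴ * y) = (Φ y)ᴴ * Φ y →
      ∀ x : Matrix n n ℂ, Φ (x * y) = Φ x * Φ y := by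
    intro y hy x
    have h := mult_domain Φ hΦ1 hcp y hy xᴴ
    calc Φ (x * y) = Φ ((yᴴ * xᴴ)ᴴ) := by
          rw [Matrix.conjTranspose_mul, Matrix.conjTranspose_conjTranspose,
            Matrix.conjTranspose_conjTranspose]
    _ = (Φ (yᴴ * xᴴ))ᴴ := hstar _
    _ = ((Φ y)ᴴ * Φ xᴴ)ᴴ := by rw [h]
    _ = (Φ xᴴ)ᴴ * Φ y := by
          rw [Matrix.conjTranspose_mul, Matrix.conjTranspose_conjTranspose]
    _ = Φ x * Φ y := by rw [← hstar, Matrix.conjTranspose_conjTranspose]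
  -- Φ v * a = α • (v * a)
  have h1 : Φ v * a = α • (v * a) := by
    have := hright a hya v
    rw [hva, hu, hafix] at this
    rw [← this, hva]
  -- v * p = v
  have hvp : v * p = v := by
    have h3 : a * (1 - p) = 0 := by rw [Matrix.mul_sub, Matrix.mul_one, hap, sub_self]
    have h4 := hvker (1 - p) h3
    rw [Matrix.mul_sub, Matrix.mul_one] at h4
    exact (sub_eq_zero.mp h4).symm
  -- Φ v * p = α • v
  have h5 : Φ v * p = α • v := by
    calc Φ v * p = (Φ v * a) * w := by rw [hp, Matrix.mul_assoc]
    _ = (α • (v * a)) * w := by rw [h1]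
    _ = α • (v * (a * w)) := by rw [Matrix.smul_mul, Matrix.mul_assoc]
    _ = α • v := by rw [← hp, hvp]
  have h6 : Φ v = Φ v * p := by
    have := hright p hyp v
    rw [hvp, hpfix] at this
    exact this
  rw [h6, h5]
end

section
/- Suppose Φ is a positive linear map on a finite-dimensional C*-algebra with spectral radius 1, and suppose E is a conditional expectation with E∘Φ = E and E(y) ≥ λ·y for all y ≥ 0 with λ > 0 (Pimsner–Popa inequality). If x ≥ 0 is nonzero with Φ(x) ≤ x, then Φ(x) = x. Consequently, if Φ(x) = r̃·x for some x ≥ 0 nonzero with r̃ real, then r̃ = 1. -/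
open Matrix Complex ComplexOrder

variable {n : Type*} [Fintype n] [DecidableEq n]

private lemma psd_neg_smul_zero {n : Type*} [Fintype n] [DecidableEq n]
    (lam : ℝ) (hlam : 0 < lam) {y : Matrix n n ℂ}
    (hy : y.PosSemidef) (hny : (-((lam : ℂ) • y)).PosSemidef) : y = 0 := by
  have hvec : ∀ v : n → ℂ, y *ᵥ v = 0 := by
    intro v
    rw [← (hy.dotProduct_mulVec_zero_iff v)]
    have h1 : 0 ≤ star v ⬝ᵥ y *ᵥ v := hy.dotProduct_mulVec_nonneg v
    have h2 : 0 ≤ star v ⬝ᵥ (-((lam : ℂ) • y)) *ᵥ v := hny.dotProduct_mulVec_nonneg v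
    have h3 : star v ⬝ᵥ (-((lam : ℂ) • y)) *ᵥ v = -((lam : ℂ) * (star v ⬝ᵥ y *ᵥ v)) := by
      simp [neg_mulVec, smul_mulVec, dotProduct_smul, smul_eq_mul, Complex.real_smul]
    rw [h3, le_neg, neg_zero] at h2
    have h4 : (0:ℂ) ≤ (lam : ℂ) * (star v ⬝ᵥ y *ᵥ v) := by
      apply mul_nonneg _ h1
      simp only [← Complex.ofReal_zero, Complex.real_le_real]
      exact hlam.le
    have h5 : (lam : ℂ) * (star v ⬝ᵥ y *ᵥ v) = 0 := le_antisymm h2 h4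
    have hl : (lam : ℂ) ≠ 0 := by
      simpa using hlam.ne'
    exact (mul_eq_zero.mp h5).resolve_left hl
  ext i j
  have := congrFun (hvec (Pi.single j 1)) i
  simpa using this

/-- Collatz–Wielandt-type rigidity via a Pimsner–Popa conditional expectation: if `Φ` is a
positive map of spectral radius `1`, `E` a positive idempotent with `E∘Φ = E` and
`E(y) ≥ λ y` for all PSD `y` (λ > 0), then `Φ(x) ≤ x` for nonzero PSD `x` forces
`Φ(x) = x`; and any PSD eigenvector has eigenvalue `1`. -/
theorem stmt14 (Φ E : Module.End ℂ (Matrix n n ℂ))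
    (hΦpos : ∀ x : Matrix n n ℂ, x.PosSemidef → (Φ x).PosSemidef)
    (hrad : IsGreatest {t : ℝ | ∃ μ ∈ spectrum ℂ Φ, t = ‖μ‖} 1)
    (hEpos : ∀ x : Matrix n n ℂ, x.PosSemidef → (E x).PosSemidef)
    (hEE : E ∘ₗ E = E) (hEΦ : E ∘ₗ Φ = E)
    (lam : ℝ) (hlam : 0 < lam)
    (hPP : ∀ y : Matrix n n ℂ, y.PosSemidef → (E y - (lam : ℂ) • y).PosSemidef) :
    (∀ x : Matrix n n ℂ, x.PosSemidef → x ≠ 0 → (x - Φ x).PosSemidef → Φ x = x) ∧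
    (∀ (x : Matrix n n ℂ) (r : ℝ), x.PosSemidef → x ≠ 0 → Φ x = (r : ℂ) • x → r = 1) := by
  have key : ∀ y : Matrix n n ℂ, y.PosSemidef → E y = 0 → y = 0 := by
    intro y hy hEy
    have := hPP y hy
    rw [hEy, zero_sub] at this
    exact psd_neg_smul_zero lam hlam hy this
  have hEΦx : ∀ x : Matrix n n ℂ, E (Φ x) = E x := by
    intro x
    have := LinearMap.ext_iff.mp hEΦ x
    simpa using this
  constructor
  · intro x hx hx0 hsub
    have hEy : E (x - Φ x) = 0 := by
      rw [map_sub, hEΦx, sub_self]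
    have := key _ hsub hEy
    rw [sub_eq_zero] at this
    exact this.symm
  · intro x r hx hx0 heig
    have hEx : E x ≠ 0 := fun h => hx0 (key x hx h)
    have : (r : ℂ) • E x = E x := by
      rw [← _root_.map_smul, ← heig, hEΦx]
    have h2 : ((r : ℂ) - 1) • E x = 0 := by
      rw [sub_smul, one_smul, this, sub_self]
    rcases smul_eq_zero.mp h2 with h | h
    · have : (r : ℂ) = 1 := by linear_combination h
      exact_mod_cast this
    · exact absurd h hEx
end

section
/- Let p_max be the supremum of the range projections of all positive fixed points of a contractive completely positive map Φ on Matrix n n ℂ with spectral radius 1. Then the Cesàro average ζ = lim (1/N)∑_{i=0}^{N-1} Φ^i(p_max) (which exists in finite dimensions) is a positive fixed point of Φ whose range projection equals p_max. -/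
open Matrix Complex ComplexOrder Filter

variable {n : Type*} [Fintype n] [DecidableEq n]

/-- `r` is the range projection of `x`: the smallest projection with `r x = x`. -/
def IsRangeProj (x r : Matrix n n ℂ) : Prop :=
  r.IsHermitian ∧ r * r = r ∧ r * x = x ∧
    ∀ q : Matrix n n ℂ, q.IsHermitian → q * q = q → q * x = x → r * q = r

set_option linter.unusedSectionVars false

private lemma proj_psd {p : Matrix n n ℂ} (hH : p.IsHermitian) (h2 : p * p = p) :
    p.PosSemidef := by
  have h : p = pᴴ * p := by rw [hH, h2]
  rw [h]; exact posSemidef_conjTranspose_mul_self p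

private lemma cp_pos {Φ : Matrix n n ℂ →ₗ[ℂ] Matrix n n ℂ} (hcp : IsCompletelyPositive Φ)
    {x : Matrix n n ℂ} (hx : x.PosSemidef) : (Φ x).PosSemidef := by
  have h1 := hcp 1 (x.submatrix Prod.snd Prod.snd) (hx.submatrix _)
  have key : blockApply 1 Φ (x.submatrix Prod.snd Prod.snd) =
      (Φ x).submatrix Prod.snd Prod.snd := rfl
  rw [key] at h1
  have h2 := h1.submatrix (fun i : n => ((0 : Fin 1), i))
  simpa [Matrix.submatrix_submatrix, Function.comp] using h2

private lemma psd_smul {A : Matrix n n ℂ} (hA : A.PosSemidef) {t : ℝ} (ht : 0 ≤ t) :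
    ((t : ℂ) • A).PosSemidef := by
  refine posSemidef_iff_dotProduct_mulVec.mpr ⟨?_, ?_⟩
  · have h1 : Aᴴ = A := hA.1
    show ((t : ℂ) • A)ᴴ = (t : ℂ) • A
    rw [conjTranspose_smul, h1]
    norm_num
  · intro v
    rw [smul_mulVec, dotProduct_smul, smul_eq_mul]
    exact mul_nonneg (Complex.zero_le_real.mpr ht) (hA.dotProduct_mulVec_nonneg v)

private lemma psd_sum {s : Finset ℕ} {f : ℕ → Matrix n n ℂ} (h : ∀ i ∈ s, (f i).PosSemidef) :
    (∑ i ∈ s, f i).PosSemidef := by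
  classical
  induction s using Finset.induction_on with
  | empty => simpa using (Matrix.PosSemidef.zero : (0 : Matrix n n ℂ).PosSemidef)
  | @insert a s hni ih =>
    rw [Finset.sum_insert hni]
    exact (h _ (Finset.mem_insert_self _ _)).add (ih fun i hi => h i (Finset.mem_insert_of_mem hi))

private lemma psd_of_tendsto {f : ℕ → Matrix n n ℂ} {L : Matrix n n ℂ}
    (hf : Tendsto f atTop (nhds L)) (h : ∀ᶠ N in atTop, (f N).PosSemidef) : L.PosSemidef := by
  refine posSemidef_iff_dotProduct_mulVec.mpr ⟨?_, ?_⟩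
  · have hc : Continuous fun A : Matrix n n ℂ => Aᴴ := continuous_id.matrix_conjTranspose
    have h1 : Tendsto (fun N => (f N)ᴴ) atTop (nhds Lᴴ) := (hc.tendsto L).comp hf
    have h2 : Tendsto f atTop (nhds Lᴴ) :=
      h1.congr' (h.mono fun N hN => hN.1)
    exact tendsto_nhds_unique h2 hf
  · intro v
    have hg : Continuous fun A : Matrix n n ℂ => star v ⬝ᵥ A *ᵥ v :=
      continuous_const.dotProduct (continuous_id.matrix_mulVec continuous_const)
    have h1 : Tendsto (fun N => star v ⬝ᵥ f N *ᵥ v) atTop (nhds (star v ⬝ᵥ L *ᵥ v)) :=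
      (hg.tendsto L).comp hf
    set z := star v ⬝ᵥ L *ᵥ v
    have hre : Tendsto (fun N => (star v ⬝ᵥ f N *ᵥ v).re) atTop (nhds z.re) :=
      (Complex.continuous_re.tendsto z).comp h1
    have him : Tendsto (fun N => (star v ⬝ᵥ f N *ᵥ v).im) atTop (nhds z.im) :=
      (Complex.continuous_im.tendsto z).comp h1
    have h0re : 0 ≤ z.re := by
      refine ge_of_tendsto hre ?_
      exact h.mono fun N hN => by
        have := (Complex.le_def.mp (hN.dotProduct_mulVec_nonneg v)).1
        simpa using this
    have h0im : z.im = 0 := by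
      have hc0 : Tendsto (fun _ : ℕ => (0 : ℝ)) atTop (nhds 0) := tendsto_const_nhds
      have h2 : Tendsto (fun N => (star v ⬝ᵥ f N *ᵥ v).im) atTop (nhds 0) := by
        refine Tendsto.congr' ?_ hc0
        exact h.mono fun N hN => by
          have := (Complex.le_def.mp (hN.dotProduct_mulVec_nonneg v)).2
          simpa using this
      exact tendsto_nhds_unique him h2
    exact Complex.le_def.mpr ⟨by simpa using h0re, by simpa using h0im.symm⟩

private lemma exists_rangeProj {x : Matrix n n ℂ} (hx : x.PosSemidef) :
    ∃ r : Matrix n n ℂ, IsRangeProj x r ∧ ∃ t : ℝ, 0 ≤ t ∧ ((t : ℂ) • r - x).PosSemidef := by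
  classical
  have hH : x.IsHermitian := hx.1
  set U : Matrix n n ℂ := (hH.eigenvectorUnitary : Matrix n n ℂ) with hUdef
  set d : n → ℝ := hH.eigenvalues with hddef
  have hUU : U * star U = 1 := Matrix.mem_unitaryGroup_iff.mp hH.eigenvectorUnitary.2
  have hUU' : star U * U = 1 := Matrix.mem_unitaryGroup_iff'.mp hH.eigenvectorUnitary.2
  set D : Matrix n n ℂ := Matrix.diagonal (fun i => (d i : ℂ)) with hDdef
  set D' : Matrix n n ℂ := Matrix.diagonal (fun i => if d i = 0 then (0:ℂ) else 1) with hD'def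
  have hspec : x = U * D * star U := hH.spectral_theorem
  have key : ∀ A B : Matrix n n ℂ, (U * A * star U) * (U * B * star U) = U * (A * B) * star U := by
    intro A B
    have h1 : star U * (U * (B * star U)) = B * star U := by
      rw [← Matrix.mul_assoc, hUU', Matrix.one_mul]
    simp only [Matrix.mul_assoc, h1]
  set r : Matrix n n ℂ := U * D' * star U with hrdef
  have hD'H : D'ᴴ = D' := by
    rw [hD'def, diagonal_conjTranspose]
    refine congrArg Matrix.diagonal ?_
    funext i; by_cases h : d i = 0 <;> simp [h, Pi.star_apply]
  have hrH : r.IsHermitian := by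
    show rᴴ = r
    rw [hrdef]
    simp only [conjTranspose_mul, Matrix.star_eq_conjTranspose, conjTranspose_conjTranspose,
      hD'H, Matrix.mul_assoc]
  have hD'D' : D' * D' = D' := by
    rw [hD'def, diagonal_mul_diagonal]
    refine congrArg Matrix.diagonal ?_
    funext i; by_cases h : d i = 0 <;> simp [h]
  have hD'D : D' * D = D := by
    rw [hD'def, hDdef, diagonal_mul_diagonal]
    refine congrArg Matrix.diagonal ?_
    funext i; by_cases h : d i = 0 <;> simp [h]
  have hr2 : r * r = r := by rw [hrdef, key, hD'D']
  have hrx : r * x = x := by rw [hrdef, hspec, key, hD'D]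
  have hmin : ∀ q : Matrix n n ℂ, q.IsHermitian → q * q = q → q * x = x → r * q = r := by
    intro q hq hq2 hqx
    set Dp : Matrix n n ℂ := Matrix.diagonal (fun i => if d i = 0 then (0:ℂ) else ((d i : ℂ))⁻¹)
      with hDpdef
    have hDDp : D * Dp = D' := by
      rw [hDdef, hDpdef, hD'def, diagonal_mul_diagonal]
      refine congrArg Matrix.diagonal ?_
      funext i
      by_cases h : d i = 0
      · simp [h]
      · have : (d i : ℂ) ≠ 0 := by exact_mod_cast h
        simp [h, mul_inv_cancel₀ this]
    have hxU : x * U = U * D := by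
      rw [hspec, Matrix.mul_assoc, hUU', Matrix.mul_one]
    have hqUD : q * (U * D) = U * D := by
      calc q * (U * D) = q * (x * U) := by rw [hxU]
        _ = q * x * U := by rw [Matrix.mul_assoc]
        _ = x * U := by rw [hqx]
        _ = U * D := hxU
    have hqUD' : q * (U * D') = U * D' := by
      have hUD' : U * D' = U * D * Dp := by rw [Matrix.mul_assoc, hDDp]
      rw [hUD', ← Matrix.mul_assoc, hqUD]
    have hqr : q * r = r := by
      rw [hrdef, ← Matrix.mul_assoc, hqUD']
    have h := congrArg Matrix.conjTranspose hqr
    rwa [conjTranspose_mul, hrH, hq] at h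
  refine ⟨r, ⟨hrH, hr2, hrx, hmin⟩, ∑ i, d i, ?_, ?_⟩
  · exact Finset.sum_nonneg fun i _ => hx.eigenvalues_nonneg i
  · set t : ℝ := ∑ i, d i with htdef
    have hti : ∀ i, d i ≤ t := fun i =>
      Finset.single_le_sum (fun j _ => hx.eigenvalues_nonneg j) (Finset.mem_univ i)
    set f : n → ℂ := fun i => (t : ℂ) * (if d i = 0 then (0:ℂ) else 1) - (d i : ℂ) with hfdef
    have h0f : 0 ≤ f := by
      intro i
      by_cases h : d i = 0
      · simp [hfdef, h]
      · have : f i = ((t - d i : ℝ) : ℂ) := by simp [hfdef, h]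
        rw [this]
        exact Complex.zero_le_real.mpr (by linarith [hti i])
    have hdiag : (Matrix.diagonal f).PosSemidef := .diagonal h0f
    have hconj := hdiag.mul_mul_conjTranspose_same U
    have heq : (t : ℂ) • r - x = U * Matrix.diagonal f * Uᴴ := by
      have h1 : Matrix.diagonal f = (t : ℂ) • D' - D := by
        ext i j
        rcases eq_or_ne i j with rfl | hij
        · simp [hfdef, hD'def, hDdef, Matrix.diagonal_apply_eq]
        · simp [hfdef, hD'def, hDdef, Matrix.diagonal_apply_ne _ hij]
      rw [hrdef, hspec, h1, ← Matrix.star_eq_conjTranspose]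
      simp only [Matrix.sub_mul, Matrix.mul_sub, Matrix.smul_mul, Matrix.mul_smul]
    rw [heq]; exact hconj

private lemma rangeProj_unique {x r r' : Matrix n n ℂ}
    (h : IsRangeProj x r) (h' : IsRangeProj x r') : r = r' := by
  have h1 : r * r' = r := h.2.2.2 r' h'.1 h'.2.1 h'.2.2.1
  have h2 : r' * r = r' := h'.2.2.2 r h.1 h.2.1 h.2.2.1
  have h3 := congrArg Matrix.conjTranspose h1
  rw [conjTranspose_mul, h.1, h'.1] at h3
  rw [← h2, h3]

/-- Let `pm` be the supremum of the range projections of the positive fixed points of a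
contractive completely positive map `Φ` with spectral radius `1`. Then the Cesàro average
`ζ = lim (1/N) ∑_{i<N} Φ^i(pm)` is a positive fixed point of `Φ` whose range projection
is `pm`. -/
theorem stmt19 (Φ : Module.End ℂ (Matrix n n ℂ))
    (hcp : IsCompletelyPositive Φ)
    (hcontr : ((1 : Matrix n n ℂ) - Φ 1).PosSemidef)
    (hrad : IsGreatest {t : ℝ | ∃ μ ∈ spectrum ℂ Φ, t = ‖μ‖} 1)
    (pm : Matrix n n ℂ) (hpmH : pm.IsHermitian) (hpmP : pm * pm = pm)
    -- `pm` dominates the range projection of every positive fixed point: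
    (hpm_ub : ∀ x r : Matrix n n ℂ, x.PosSemidef → Φ x = x → IsRangeProj x r → pm * r = r)
    -- and `pm` is the least projection doing so:
    (hpm_lub : ∀ q : Matrix n n ℂ, q.IsHermitian → q * q = q →
      (∀ x r : Matrix n n ℂ, x.PosSemidef → Φ x = x → IsRangeProj x r → q * r = r) →
      pm * q = pm)
    (ζ : Matrix n n ℂ)
    (hζ : Tendsto (fun N : ℕ => (N : ℂ)⁻¹ • ∑ i ∈ Finset.range N, (Φ ^ i) pm)
      atTop (nhds ζ)) :
    ζ.PosSemidef ∧ Φ ζ = ζ ∧ IsRangeProj ζ pm := by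
  set a : ℕ → Matrix n n ℂ := fun N => (N : ℂ)⁻¹ • ∑ i ∈ Finset.range N, (Φ ^ i) pm with hadef
  have hΦpos : ∀ {y : Matrix n n ℂ}, y.PosSemidef → (Φ y).PosSemidef := fun hy => cp_pos hcp hy
  have hpm_psd : pm.PosSemidef := proj_psd hpmH hpmP
  have hiter : ∀ i : ℕ, ((Φ ^ i) pm).PosSemidef := by
    intro i
    induction i with
    | zero => simpa using hpm_psd
    | succ k ih =>
      have h1 : (Φ ^ (k + 1)) pm = Φ ((Φ ^ k) pm) := by
        rw [pow_succ', Module.End.mul_apply]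
      rw [h1]; exact hΦpos ih
  have hinvC : ∀ N : ℕ, ((N : ℂ))⁻¹ = (((N : ℝ)⁻¹ : ℝ) : ℂ) := by
    intro N; push_cast; ring
  have haN : ∀ N, (a N).PosSemidef := by
    intro N
    have hsum := psd_sum (s := Finset.range N) (f := fun i => (Φ ^ i) pm) (fun i _ => hiter i)
    simp only [hadef]
    rw [hinvC]
    exact psd_smul hsum (by positivity)
  have hζP : ζ.PosSemidef := psd_of_tendsto hζ (Eventually.of_forall haN)
  -- Cesàro fixed-point argument
  have hΦcont : Continuous (Φ : Matrix n n ℂ → Matrix n n ℂ) :=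
    LinearMap.continuous_of_finiteDimensional _
  have hsum_succ : ∀ N : ℕ, Φ (a N) = a N + (N : ℂ)⁻¹ • ((Φ ^ N) pm - pm) := by
    intro N
    have h1 : Φ (a N) = (N : ℂ)⁻¹ • ∑ i ∈ Finset.range N, (Φ ^ (i + 1)) pm := by
      simp only [hadef]
      rw [_root_.map_smul, map_sum]
      congr 1
      refine Finset.sum_congr rfl fun i _ => ?_
      rw [pow_succ', Module.End.mul_apply]
    have e1 := Finset.sum_range_succ' (fun i => (Φ ^ i) pm) N
    have e2 := Finset.sum_range_succ (fun i => (Φ ^ i) pm) N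
    simp only [pow_zero, Module.End.one_apply] at e1
    rw [e2] at e1
    have h2 : ∑ i ∈ Finset.range N, (Φ ^ (i + 1)) pm
        = ∑ i ∈ Finset.range N, (Φ ^ i) pm + ((Φ ^ N) pm - pm) := by
      calc ∑ i ∈ Finset.range N, (Φ ^ (i + 1)) pm
          = (∑ i ∈ Finset.range N, (Φ ^ (i + 1)) pm + pm) - pm := by rw [add_sub_cancel_right]
        _ = (∑ i ∈ Finset.range N, (Φ ^ i) pm + (Φ ^ N) pm) - pm := by rw [← e1]
        _ = ∑ i ∈ Finset.range N, (Φ ^ i) pm + ((Φ ^ N) pm - pm) := by rw [add_sub_assoc]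
    rw [h1, h2, smul_add]
  have hinv0 : Tendsto (fun N : ℕ => ((N : ℂ))⁻¹) atTop (nhds 0) := by
    have h1 : Tendsto (fun N : ℕ => (((N : ℝ)⁻¹ : ℝ) : ℂ)) atTop (nhds ((0 : ℝ) : ℂ)) :=
      (Complex.continuous_ofReal.tendsto 0).comp tendsto_inv_atTop_nhds_zero_nat
    rw [Complex.ofReal_zero] at h1
    exact h1.congr fun N => (hinvC N).symm
  have hz1 : Tendsto (fun N : ℕ => (N : ℂ)⁻¹ • pm) atTop (nhds 0) := by
    simpa using hinv0.smul_const pm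
  have hz2 : Tendsto (fun N : ℕ => (N : ℂ)⁻¹ • (Φ ^ N) pm) atTop (nhds 0) := by
    have key : ∀ N : ℕ, (N : ℂ)⁻¹ • (Φ ^ N) pm
        = ((N : ℂ)⁻¹ * ((N : ℂ) + 1)) • a (N + 1) - a N := by
      intro N
      have hne : ((N : ℂ) + 1) ≠ 0 := by
        have h := Nat.cast_ne_zero (R := ℂ).mpr (Nat.succ_ne_zero N)
        push_cast at h; exact h
      simp only [hadef]
      rw [Finset.sum_range_succ, Nat.cast_add, Nat.cast_one, smul_smul, mul_assoc,
        mul_inv_cancel₀ hne, mul_one, smul_add, add_sub_cancel_left]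
    have hc : Tendsto (fun N : ℕ => (N : ℂ)⁻¹ * ((N : ℂ) + 1)) atTop (nhds 1) := by
      have h1 : Tendsto (fun N : ℕ => 1 + ((N : ℂ))⁻¹) atTop (nhds (1 + 0)) :=
        tendsto_const_nhds.add hinv0
      rw [add_zero] at h1
      refine Tendsto.congr' ?_ h1
      filter_upwards [eventually_ge_atTop 1] with N hN
      have hN0 : (N : ℂ) ≠ 0 := Nat.cast_ne_zero.mpr (by omega)
      rw [mul_add, mul_one, inv_mul_cancel₀ hN0]
    have h2 : Tendsto (fun N : ℕ => ((N : ℂ)⁻¹ * ((N : ℂ) + 1)) • a (N + 1)) atTop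
        (nhds ((1 : ℂ) • ζ)) :=
      hc.smul (hζ.comp (tendsto_add_atTop_nat 1))
    have h3 := h2.sub hζ
    rw [one_smul, sub_self] at h3
    exact Tendsto.congr (fun N => (key N).symm) h3
  have hfix : Φ ζ = ζ := by
    have t1 : Tendsto (fun N => Φ (a N)) atTop (nhds (Φ ζ)) := (hΦcont.tendsto ζ).comp hζ
    have t2 : Tendsto (fun N => Φ (a N)) atTop (nhds (ζ + (0 - 0))) := by
      refine Tendsto.congr (fun N => ?_) (hζ.add (hz2.sub hz1))
      rw [hsum_succ N, smul_sub]
    rw [show ζ + ((0 : Matrix n n ℂ) - 0) = ζ by simp] at t2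
    exact tendsto_nhds_unique t1 t2
  -- range projection part
  obtain ⟨r, hr, _⟩ := exists_rangeProj hζP
  have hpr : pm * r = r := hpm_ub ζ r hζP hfix hr
  have hpmζ : pm * ζ = ζ := by
    conv_lhs => rw [← hr.2.2.1]
    rw [← Matrix.mul_assoc, hpr, hr.2.2.1]
  refine ⟨hζP, hfix, hpmH, hpmP, hpmζ, ?_⟩
  intro q hqH hq2 hqζ
  apply hpm_lub q hqH hq2
  intro x r' hx hfx hr'
  obtain ⟨r₀, hr₀, t, ht, hdom₀⟩ := exists_rangeProj hx
  have hr'r₀ : r' = r₀ := rangeProj_unique hr' hr₀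
  have hdom : ((t : ℂ) • r' - x).PosSemidef := by rw [hr'r₀]; exact hdom₀
  have hpr' : pm * r' = r' := hpm_ub x r' hx hfx hr'
  have hr'pm : r' * pm = r' := by
    have h := congrArg Matrix.conjTranspose hpr'
    rwa [conjTranspose_mul, hr'.1, hpmH] at h
  have hproj : (pm - r') * (pm - r') = pm - r' := by
    rw [Matrix.sub_mul, Matrix.mul_sub, Matrix.mul_sub, hpmP, hpr', hr'pm, hr'.2.1]
    abel
  have hpmr' : (pm - r').PosSemidef := proj_psd (hpmH.sub hr'.1) hproj
  have hstep0 : ((t : ℂ) • pm - x).PosSemidef := by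
    have h1 : (t : ℂ) • pm - x = (t : ℂ) • (pm - r') + ((t : ℂ) • r' - x) := by
      rw [smul_sub]; abel
    rw [h1]
    exact (psd_smul hpmr' ht).add hdom
  have hstepi : ∀ i : ℕ, ((t : ℂ) • (Φ ^ i) pm - x).PosSemidef := by
    intro i; induction i with
    | zero => simpa using hstep0
    | succ k ih =>
      have h1 : (t : ℂ) • (Φ ^ (k + 1)) pm - x = Φ ((t : ℂ) • (Φ ^ k) pm - x) := by
        rw [map_sub, _root_.map_smul, hfx]
        congr 2
        rw [pow_succ', Module.End.mul_apply]
      rw [h1]; exact hΦpos ih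
  have hstepN : ∀ N : ℕ, 1 ≤ N → ((t : ℂ) • a N - x).PosSemidef := by
    intro N hN
    have hN0 : (N : ℂ) ≠ 0 := Nat.cast_ne_zero.mpr (by omega)
    have h1 : (N : ℂ)⁻¹ • ∑ i ∈ Finset.range N, ((t : ℂ) • (Φ ^ i) pm - x)
        = (t : ℂ) • a N - x := by
      rw [Finset.sum_sub_distrib, Finset.sum_const, Finset.card_range, smul_sub,
        ← Finset.smul_sum, smul_comm ((N : ℂ))⁻¹ ((t : ℂ))]
      simp only [hadef]
      congr 1
      rw [← Nat.cast_smul_eq_nsmul ℂ, smul_smul, inv_mul_cancel₀ hN0, one_smul]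
    rw [← h1, hinvC]
    exact psd_smul (psd_sum fun i _ => hstepi i) (by positivity)
  have hlim : ((t : ℂ) • ζ - x).PosSemidef := by
    refine psd_of_tendsto ((hζ.const_smul ((t : ℂ))).sub tendsto_const_nhds) ?_
    filter_upwards [eventually_ge_atTop 1] with N hN using hstepN N hN
  set e : Matrix n n ℂ := 1 - q with hedef
  have heH : eᴴ = e := by rw [hedef, conjTranspose_sub, conjTranspose_one, hqH]
  have heζ : e * ζ = 0 := by rw [hedef, Matrix.sub_mul, Matrix.one_mul, hqζ, sub_self]
  have hconj := hlim.mul_mul_conjTranspose_same e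
  have hkey : e * ((t : ℂ) • ζ - x) * eᴴ = -(e * x * e) := by
    have h0 : e * ((t : ℂ) • ζ) = 0 := by rw [Matrix.mul_smul, heζ, smul_zero]
    rw [heH, Matrix.mul_sub e ((t : ℂ) • ζ) x, Matrix.sub_mul (e * ((t : ℂ) • ζ)) (e * x) e,
      h0, Matrix.zero_mul, zero_sub]
  rw [hkey] at hconj
  obtain ⟨S, hsq, hsH⟩ : ∃ S : Matrix n n ℂ, S * S = x ∧ Sᴴ = S := by
    open scoped MatrixOrder Matrix.Norms.L2Operator in
    exact ⟨CFC.sqrt x, CFC.sqrt_mul_sqrt_self x hx.nonneg, (CFC.sqrt_nonneg x).posSemidef.1⟩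
  have hBB : (S * e)ᴴ * (S * e) = e * x * e := by
    rw [conjTranspose_mul, hsH, heH]
    calc e * S * (S * e) = e * (S * S) * e := by
          simp only [Matrix.mul_assoc]
      _ = e * x * e := by rw [hsq]
  have hBzero : S * e = 0 := by
    have hq0 : ∀ v : n → ℂ, (S * e) *ᵥ v = 0 := by
      intro v
      have h2 : star v ⬝ᵥ (e * x * e) *ᵥ v
          = star ((S * e) *ᵥ v) ⬝ᵥ ((S * e) *ᵥ v) := by
        rw [← hBB, ← mulVec_mulVec, dotProduct_mulVec, ← star_mulVec]
      have h1 : star v ⬝ᵥ (e * x * e) *ᵥ v ≤ 0 := by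
        have h := hconj.dotProduct_mulVec_nonneg v
        rw [Matrix.neg_mulVec, dotProduct_neg] at h
        exact neg_nonneg.mp h
      have h3 : 0 ≤ star ((S * e) *ᵥ v) ⬝ᵥ ((S * e) *ᵥ v) :=
        dotProduct_star_self_nonneg _
      have h4 : star ((S * e) *ᵥ v) ⬝ᵥ ((S * e) *ᵥ v) = 0 :=
        le_antisymm (h2 ▸ h1) h3
      exact dotProduct_star_self_eq_zero.mp h4
    ext i j
    have h5 := congr_fun (hq0 (Pi.single j 1)) i
    simpa [Matrix.mulVec_single] using h5
  have hxe : x * e = 0 := by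
    rw [← hsq, Matrix.mul_assoc, hBzero, Matrix.mul_zero]
  have hxq : x * q = x := by
    rw [hedef, Matrix.mul_sub, Matrix.mul_one, sub_eq_zero] at hxe
    exact hxe.symm
  have hqx : q * x = x := by
    have h := congrArg Matrix.conjTranspose hxq
    rwa [conjTranspose_mul, hqH, hx.1] at h
  have h5 := hr'.2.2.2 q hqH hq2 hqx
  have h6 := congrArg Matrix.conjTranspose h5
  rwa [conjTranspose_mul, hqH, hr'.1] at h6
end
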